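/- For m ≥ 1, the number of random walk labelings of the friendship graph F_m satisfies (2m-1)\,L(F_m) = (4m-1)\,(2m)! (equivalently L(F_m) = (4m-1)(2m)!/(2m-1)). -/

import Mathlib

open Finset

/-- A sequence of `k` distinct vertices of `G` such that every vertex other than the
first is adjacent to some earlier vertex (a random walk labeling disrupted after the
`k`-th vertex). -/
def IsRWLPrefix {V : Type*} (G : SimpleGraph V) {k : ℕ} (v : Fin k → V) : Prop :=
  Function.Injective v ∧ ∀ i : Fin k, i.val ≠ 0 → ∃ j : Fin k, j < i ∧ G.Adj (v j) (v i)

/-- `L_k(G)`: the number of random walk labelings of `G` disrupted after the `k`-th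
vertex.  For `k = 0` this equals `1` (the empty sequence). -/
noncomputable def rwlPrefixCount {V : Type*} (G : SimpleGraph V) (k : ℕ) : ℕ :=
  Nat.card {v : Fin k → V // IsRWLPrefix G v}

/-- `L(G)`: the number of random walk labelings of `G`, i.e. orderings of all the
vertices of `G` in which every vertex other than the first is adjacent to some
earlier vertex. -/
noncomputable def rwlCount {V : Type*} (G : SimpleGraph V) [Fintype V] : ℕ :=
  rwlPrefixCount G (Fintype.card V)

/-- The one-point union `C_n^(m)` of `m` cycle graphs `C_n`: `m` disjoint copies of the
cycle on `n` vertices with one vertex of each copy identified into a single common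
vertex `none`.  The `i`-th copy consists of the hub together with the inner vertices
`(i, 0), …, (i, n-2)`, which form a path whose two ends are joined to the hub. -/
def cycleUnion (m n : ℕ) : SimpleGraph (Option (Fin m × Fin (n - 1))) :=
  SimpleGraph.fromRel (fun x y =>
    match x, y with
    | none, some (_, j) => j.val = 0 ∨ j.val = n - 2
    | some (i, j), some (i', j') => i = i' ∧ j.val + 1 = j'.val
    | _, _ => False)

/-- The friendship graph `F_m`: the one-point union of `m` triangles. -/
def friendshipGraph (m : ℕ) : SimpleGraph (Option (Fin m × Fin 2)) :=
  cycleUnion m 3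

namespace FriendshipRWL

theorem adj_hub (m : ℕ) (b : Fin m × Fin 2) : (friendshipGraph m).Adj none (some b) := by
  simp [friendshipGraph, cycleUnion, SimpleGraph.fromRel_adj]
  omega

theorem adj_some (m : ℕ) (x y : Fin m × Fin 2) :
    (friendshipGraph m).Adj (some x) (some y) ↔ x.1 = y.1 ∧ x.2 ≠ y.2 := by
  obtain ⟨i, a⟩ := x; obtain ⟨i', a'⟩ := y
  simp only [friendshipGraph, cycleUnion, SimpleGraph.fromRel_adj, ne_eq, Option.some.injEq,
    Prod.mk.injEq, Prod.ext_iff]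
  fin_cases a <;> fin_cases a' <;> simp <;> aesop

def flipb {m : ℕ} (b : Fin m × Fin 2) : Fin m × Fin 2 := (b.1, b.2 + 1)

lemma fin2_ne_iff : ∀ a c : Fin 2, a ≠ c ↔ c = a + 1 := by decide
lemma fin2_add : ∀ a : Fin 2, a + 1 + 1 = a := by decide
lemma fin2_add_ne : ∀ a : Fin 2, a + 1 ≠ a := by decide
lemma fin2_cases : ∀ a c : Fin 2, c = a ∨ c = a + 1 := by decide

lemma adj_some_iff (m : ℕ) (x y : Fin m × Fin 2) :
    (friendshipGraph m).Adj (some x) (some y) ↔ y = flipb x := by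
  rw [adj_some, Prod.ext_iff]
  constructor
  · rintro ⟨h1, h2⟩; exact ⟨h1.symm, (fin2_ne_iff _ _).mp h2⟩
  · rintro ⟨h1, h2⟩; exact ⟨h1.symm, (fin2_ne_iff _ _).mpr h2⟩

lemma flipb_flipb {m : ℕ} (x : Fin m × Fin 2) : flipb (flipb x) = x := by
  simp [flipb, fin2_add]

@[simp] lemma flipb_fst {m : ℕ} (x : Fin m × Fin 2) : (flipb x).1 = x.1 := rfl

lemma flipb_ne {m : ℕ} (x : Fin m × Fin 2) : flipb x ≠ x :=
  fun h => fin2_add_ne x.2 (congrArg Prod.snd h)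

lemma finval {k a b : ℕ} {ha : a < k} {hb : b < k} (h : (⟨a, ha⟩ : Fin k) = ⟨b, hb⟩) :
    a = b := congrArg Fin.val h

variable (n : ℕ)

abbrev B := Fin (n+1) × Fin 2
abbrev V := Option (B n)
abbrev G := friendshipGraph (n+1)

/-- labeling starting with the hub -/
def g0 (w : Fin (2*n+2) ≃ B n) : Fin (2*n+3) → V n := fun i =>
  if h : i.val = 0 then none else some (w ⟨i.val - 1, by omega⟩)

/-- labeling with the hub in second position -/
def g1 (w : Fin (2*n+2) ≃ B n) : Fin (2*n+3) → V n := fun i =>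
  if h0 : i.val = 0 then some (w ⟨0, by omega⟩)
  else if h1 : i.val = 1 then none
  else some (w ⟨i.val - 1, by omega⟩)

/-- labeling with the hub in third position -/
def g2 (b : B n) (w : Fin (2*n) ≃ {x : B n // x.1 ≠ b.1}) : Fin (2*n+3) → V n := fun i =>
  if h0 : i.val = 0 then some b
  else if h1 : i.val = 1 then some (flipb b)
  else if h2 : i.val = 2 then none
  else some (w ⟨i.val - 3, by omega⟩ : {x : B n // x.1 ≠ b.1}).val

lemma isRWL_g0 (w : Fin (2*n+2) ≃ B n) : IsRWLPrefix (G n) (g0 n w) := by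
  constructor
  · intro i j h
    unfold g0 at h
    split_ifs at h
    all_goals try (rw [Option.some.injEq] at h)
    all_goals try (exact Option.noConfusion h)
    all_goals try (apply Fin.ext; omega)
    all_goals (have := finval (w.injective h); apply Fin.ext; omega)
  · intro i hi
    refine ⟨⟨0, by omega⟩, by rw [Fin.lt_def]; exact Nat.pos_of_ne_zero hi, ?_⟩
    unfold g0
    rw [dif_pos rfl, dif_neg hi]
    exact adj_hub _ _

lemma isRWL_g1 (w : Fin (2*n+2) ≃ B n) : IsRWLPrefix (G n) (g1 n w) := by
  constructor
  · intro i j h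
    unfold g1 at h
    split_ifs at h
    all_goals try (rw [Option.some.injEq] at h)
    all_goals try (exact Option.noConfusion h)
    all_goals try (apply Fin.ext; omega)
    all_goals (have := finval (w.injective h); apply Fin.ext; omega)
  · intro i hi
    by_cases h1 : i.val = 1
    · refine ⟨⟨0, by omega⟩, by rw [Fin.lt_def]; show (0:ℕ) < i.val; omega, ?_⟩
      unfold g1
      rw [dif_pos rfl]
      rw [show (if h0 : i.val = 0 then some (w ⟨0, by omega⟩) else if h1 : i.val = 1 then none
        else some (w ⟨i.val - 1, by omega⟩)) = none by rw [dif_neg hi, dif_pos h1]]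
      exact (adj_hub _ _).symm
    · refine ⟨⟨1, by omega⟩, by rw [Fin.lt_def]; show (1:ℕ) < i.val; omega, ?_⟩
      unfold g1
      rw [dif_neg (by simp), dif_pos rfl, dif_neg hi, dif_neg h1]
      exact adj_hub _ _

lemma isRWL_g2 (b : B n) (w : Fin (2*n) ≃ {x : B n // x.1 ≠ b.1}) :
    IsRWLPrefix (G n) (g2 n b w) := by
  have key : ∀ j : Fin (2*n), (w j : B n).1 ≠ b.1 := fun j => (w j).2
  constructor
  · intro i j h
    unfold g2 at h
    split_ifs at h
    all_goals try (rw [Option.some.injEq] at h)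
    all_goals try (exact Option.noConfusion h)
    all_goals try (apply Fin.ext; omega)
    all_goals try (exact absurd h.symm (flipb_ne b))
    all_goals try (exact absurd h (flipb_ne b))
    all_goals try (exact absurd (congrArg Prod.fst h).symm (key _))
    all_goals try (exact absurd (congrArg Prod.fst h) (key _))
    all_goals (have := finval (w.injective (Subtype.ext h)); apply Fin.ext; omega)
  · intro i hi
    by_cases h1 : i.val = 1
    · refine ⟨⟨0, by omega⟩, by rw [Fin.lt_def]; show (0:ℕ) < i.val; omega, ?_⟩
      unfold g2
      rw [dif_pos rfl, dif_neg hi, dif_pos h1]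
      exact (adj_some_iff _ _ _).mpr rfl
    by_cases h2 : i.val = 2
    · refine ⟨⟨0, by omega⟩, by rw [Fin.lt_def]; show (0:ℕ) < i.val; omega, ?_⟩
      unfold g2
      rw [dif_pos rfl, dif_neg hi, dif_neg h1, dif_pos h2]
      exact (adj_hub _ _).symm
    · refine ⟨⟨2, by omega⟩, by rw [Fin.lt_def]; show (2:ℕ) < i.val; omega, ?_⟩
      unfold g2
      rw [dif_neg (by simp), dif_neg (by simp), dif_pos rfl, dif_neg hi, dif_neg h1, dif_neg h2]
      exact adj_hub _ _


def i0 : Fin (2*n+3) := ⟨0, by omega⟩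
def i1 : Fin (2*n+3) := ⟨1, by omega⟩
def i2 : Fin (2*n+3) := ⟨2, by omega⟩

@[simp] lemma i0_val : (i0 n).val = 0 := rfl
@[simp] lemma i1_val : (i1 n).val = 1 := rfl
@[simp] lemma i2_val : (i2 n).val = 2 := rfl

lemma struct {v : Fin (2*n+3) → V n} (h : IsRWLPrefix (G n) v) :
    v (i0 n) = none ∨ v (i1 n) = none ∨
      (∃ b, v (i0 n) = some b ∧ v (i1 n) = some (flipb b) ∧ v (i2 n) = none) := by
  by_cases h0 : v (i0 n) = none
  · exact Or.inl h0
  by_cases h1 : v (i1 n) = none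
  · exact Or.inr (Or.inl h1)
  obtain ⟨b0, hb0⟩ := Option.ne_none_iff_exists'.mp h0
  obtain ⟨b1, hb1⟩ := Option.ne_none_iff_exists'.mp h1
  obtain ⟨j, hj, hadj⟩ := h.2 (i1 n) (by simp)
  have hj' : j.val < 1 := hj
  have hj0 : j = i0 n := Fin.ext (by rw [i0_val]; omega)
  rw [hj0, hb0, hb1] at hadj
  have hb1' : b1 = flipb b0 := (adj_some_iff _ _ _).mp hadj
  refine Or.inr (Or.inr ⟨b0, hb0, by rw [hb1, hb1'], ?_⟩)
  by_cases h2 : v (i2 n) = none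
  · exact h2
  exfalso
  obtain ⟨b2, hb2⟩ := Option.ne_none_iff_exists'.mp h2
  obtain ⟨j2, hj2, hadj2⟩ := h.2 (i2 n) (by simp)
  have hj2' : j2.val < 2 := hj2
  have hcase : j2.val = 0 ∨ j2.val = 1 := by omega
  rcases hcase with hz | ho
  · have hj2e : j2 = i0 n := Fin.ext (by simp [hz])
    rw [hj2e, hb0, hb2] at hadj2
    have hb2' : b2 = flipb b0 := (adj_some_iff _ _ _).mp hadj2
    have hv : v (i2 n) = v (i1 n) := by rw [hb2, hb1, hb2', hb1']
    have := congrArg Fin.val (h.1 hv)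
    simp at this
  · have hj2e : j2 = i1 n := Fin.ext (by simp [ho])
    rw [hj2e, hb1, hb2, hb1'] at hadj2
    have hb2' : b2 = flipb (flipb b0) := (adj_some_iff _ _ _).mp hadj2
    rw [flipb_flipb] at hb2'
    have hv : v (i2 n) = v (i0 n) := by rw [hb2, hb0, hb2']
    have := congrArg Fin.val (h.1 hv)
    simp at this

abbrev EE := (Fin (2*n+2) ≃ B n) ⊕ (Fin (2*n+2) ≃ B n) ⊕
    (Σ b : B n, Fin (2*n) ≃ {x : B n // x.1 ≠ b.1})

def bigG : EE n → {v : Fin (2*n+3) → V n // IsRWLPrefix (G n) v}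
  | .inl w => ⟨g0 n w, isRWL_g0 n w⟩
  | .inr (.inl w) => ⟨g1 n w, isRWL_g1 n w⟩
  | .inr (.inr ⟨b, w⟩) => ⟨g2 n b w, isRWL_g2 n b w⟩

def idxS (j : Fin (2*n+2)) : Fin (2*n+3) := ⟨j.val+1, by omega⟩
def idxT (j : Fin (2*n)) : Fin (2*n+3) := ⟨j.val+3, by omega⟩

@[simp] lemma idxS_val (j : Fin (2*n+2)) : (idxS n j).val = j.val + 1 := rfl
@[simp] lemma idxT_val (j : Fin (2*n)) : (idxT n j).val = j.val + 3 := rfl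

lemma g0_zero (w : Fin (2*n+2) ≃ B n) : g0 n w (i0 n) = none := rfl
lemma g1_zero (w : Fin (2*n+2) ≃ B n) : g1 n w (i0 n) = some (w ⟨0, by omega⟩) := rfl
lemma g1_one (w : Fin (2*n+2) ≃ B n) : g1 n w (i1 n) = none := rfl
lemma g2_zero (b : B n) (w : Fin (2*n) ≃ {x : B n // x.1 ≠ b.1}) : g2 n b w (i0 n) = some b := rfl
lemma g2_one (b : B n) (w : Fin (2*n) ≃ {x : B n // x.1 ≠ b.1}) :
    g2 n b w (i1 n) = some (flipb b) := rfl
lemma g2_two (b : B n) (w : Fin (2*n) ≃ {x : B n // x.1 ≠ b.1}) : g2 n b w (i2 n) = none := rfl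

lemma g0_succ (w : Fin (2*n+2) ≃ B n) (j : Fin (2*n+2)) :
    g0 n w (idxS n j) = some (w j) := by
  unfold g0
  rw [dif_neg (by simp)]
  exact congrArg _ (congrArg w (Fin.ext (by simp)))

lemma g1_tail (w : Fin (2*n+2) ≃ B n) (j : Fin (2*n+2)) (hj : j.val ≠ 0) :
    g1 n w (idxS n j) = some (w j) := by
  unfold g1
  rw [dif_neg (by simp), dif_neg (by simp only [idxS_val]; omega)]
  exact congrArg _ (congrArg w (Fin.ext (by simp)))

lemma g2_tail (b : B n) (w : Fin (2*n) ≃ {x : B n // x.1 ≠ b.1}) (j : Fin (2*n)) :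
    g2 n b w (idxT n j) = some (w j : {x : B n // x.1 ≠ b.1}).val := by
  unfold g2
  rw [dif_neg (by simp), dif_neg (by simp), dif_neg (by simp)]
  exact congrArg _ (congrArg Subtype.val (congrArg w (Fin.ext (by simp))))

lemma bigG_inj : Function.Injective (bigG n) := by
  rintro (w | w | ⟨b, w⟩) (w' | w' | ⟨b', w'⟩) h
  · have h' : g0 n w = g0 n w' := congrArg Subtype.val h
    have hw : ∀ j : Fin (2*n+2), w j = w' j := by
      intro j
      have hc := congrFun h' (idxS n j)
      rw [g0_succ, g0_succ, Option.some.injEq] at hc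
      exact hc
    exact congrArg Sum.inl (Equiv.coe_fn_injective (funext hw))
  · have h' : g0 n w = g1 n w' := congrArg Subtype.val h
    exact absurd ((g0_zero n w).symm.trans (congrFun h' (i0 n)) |>.trans (g1_zero n w')) (by simp)
  · have h' : g0 n w = g2 n b' w' := congrArg Subtype.val h
    exact absurd ((g0_zero n w).symm.trans (congrFun h' (i0 n)) |>.trans (g2_zero n b' w')) (by simp)
  · have h' : g1 n w = g0 n w' := congrArg Subtype.val h
    exact absurd ((g0_zero n w').symm.trans (congrFun h' (i0 n)).symm |>.trans (g1_zero n w)) (by simp)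
  · have h' : g1 n w = g1 n w' := congrArg Subtype.val h
    have hw : ∀ j : Fin (2*n+2), w j = w' j := by
      intro j
      by_cases hj : j.val = 0
      · have hj' : j = ⟨0, by omega⟩ := Fin.ext hj
        have hc := congrFun h' (i0 n)
        rw [g1_zero, g1_zero, Option.some.injEq] at hc
        rw [hj']; exact hc
      · have hc := congrFun h' (idxS n j)
        rw [g1_tail n w j hj, g1_tail n w' j hj, Option.some.injEq] at hc
        exact hc
    exact congrArg (Sum.inr ∘ Sum.inl) (Equiv.coe_fn_injective (funext hw))
  · have h' : g1 n w = g2 n b' w' := congrArg Subtype.val h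
    exact absurd ((g1_one n w).symm.trans (congrFun h' (i1 n)) |>.trans (g2_one n b' w')) (by simp)
  · have h' : g2 n b w = g0 n w' := congrArg Subtype.val h
    exact absurd ((g0_zero n w').symm.trans (congrFun h' (i0 n)).symm |>.trans (g2_zero n b w)) (by simp)
  · have h' : g2 n b w = g1 n w' := congrArg Subtype.val h
    exact absurd ((g1_one n w').symm.trans (congrFun h' (i1 n)).symm |>.trans (g2_one n b w)) (by simp)
  · have h' : g2 n b w = g2 n b' w' := congrArg Subtype.val h
    have hb : b = b' := by
      have hc := congrFun h' (i0 n)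
      rw [g2_zero, g2_zero, Option.some.injEq] at hc
      exact hc
    subst hb
    have hw : ∀ j : Fin (2*n), w j = w' j := by
      intro j
      have hc := congrFun h' (idxT n j)
      rw [g2_tail, g2_tail, Option.some.injEq] at hc
      exact Subtype.ext hc
    exact congrArg (Sum.inr ∘ Sum.inr) (congrArg (Sigma.mk b) (Equiv.coe_fn_injective (funext hw)))

lemma card_B : Fintype.card (B n) = 2*n+2 := by
  simp only [B, Fintype.card_prod, Fintype.card_fin]
  ring

lemma card_ne (c : Fin (n+1)) : Fintype.card {x : B n // x.1 ≠ c} = 2*n := by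
  have e : {x : B n // x.1 ≠ c} ≃ {y : Fin (n+1) // y ≠ c} × Fin 2 :=
    { toFun := fun x => (⟨x.1.1, x.2⟩, x.1.2)
      invFun := fun p => ⟨(p.1.1, p.2), p.1.2⟩
      left_inv := fun x => rfl
      right_inv := fun p => rfl }
  rw [Fintype.card_congr e, Fintype.card_prod, Fintype.card_fin]
  have hy : Fintype.card {y : Fin (n+1) // y ≠ c} = n := by
    simp only [ne_eq]
    rw [Fintype.card_subtype_compl, Fintype.card_subtype_eq, Fintype.card_fin]
    omega
  rw [hy]
  ring

lemma eq_or_flip {m : ℕ} {b c : Fin m × Fin 2} (h : c.1 = b.1) : c = b ∨ c = flipb b := by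
  rcases fin2_cases b.2 c.2 with h2 | h2
  · exact Or.inl (Prod.ext_iff.mpr ⟨h, h2⟩)
  · exact Or.inr (Prod.ext_iff.mpr ⟨h, h2⟩)

def dest1 (j : Fin (2*n+2)) : Fin (2*n+3) := if j.val = 0 then i0 n else idxS n j

lemma dest1_val (j : Fin (2*n+2)) :
    (dest1 n j).val = if j.val = 0 then 0 else j.val + 1 := by
  unfold dest1
  split_ifs with h
  · simp
  · simp

lemma dest1_ne_one (j : Fin (2*n+2)) : (dest1 n j).val ≠ 1 := by
  rw [dest1_val]
  split_ifs with h <;> omega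

lemma dest1_inj : Function.Injective (dest1 n) := by
  intro j j' h
  have := congrArg Fin.val h
  rw [dest1_val, dest1_val] at this
  apply Fin.ext
  split_ifs at this <;> omega

lemma bigG_surj : Function.Surjective (bigG n) := by
  rintro ⟨v, hP⟩
  rcases struct n hP with h0 | h1 | ⟨b, hb0, hb1, h2⟩
  · -- hub first
    have hsome : ∀ j : Fin (2*n+2), (v (idxS n j)).isSome := by
      intro j
      rw [Option.isSome_iff_ne_none]
      intro hc
      have hij := congrArg Fin.val (hP.1 (hc.trans h0.symm))
      simp at hij
    have hu : Function.Injective (fun j : Fin (2*n+2) => (v (idxS n j)).get (hsome j)) := by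
      intro j j' hjj
      simp only at hjj
      have hvv : v (idxS n j) = v (idxS n j') := by
        rw [← Option.some_get (hsome j), ← Option.some_get (hsome j'), hjj]
      have := congrArg Fin.val (hP.1 hvv)
      simp at this
      exact Fin.ext this
    have hbij : Function.Bijective (fun j : Fin (2*n+2) => (v (idxS n j)).get (hsome j)) :=
      (Fintype.bijective_iff_injective_and_card _).mpr ⟨hu, by rw [Fintype.card_fin, card_B]⟩
    refine ⟨Sum.inl (Equiv.ofBijective _ hbij), Subtype.ext (funext fun i => ?_)⟩
    show g0 n (Equiv.ofBijective _ hbij) i = v i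
    by_cases hi : i.val = 0
    · have : i = i0 n := Fin.ext hi
      rw [this, g0_zero, h0]
    · have hrep : i = idxS n ⟨i.val - 1, by omega⟩ := Fin.ext (by simp; omega)
      rw [hrep, g0_succ, Equiv.ofBijective_apply]
      exact Option.some_get (hsome _)
  · -- hub second
    have hne : v (i0 n) ≠ none := by
      intro hc
      have := congrArg Fin.val (hP.1 (hc.trans h1.symm))
      simp at this
    have hsome : ∀ j : Fin (2*n+2), (v (dest1 n j)).isSome := by
      intro j
      rw [Option.isSome_iff_ne_none]
      intro hc
      have hij := congrArg Fin.val (hP.1 (hc.trans h1.symm))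
      simp at hij
      exact dest1_ne_one n j hij
    have hu : Function.Injective (fun j : Fin (2*n+2) => (v (dest1 n j)).get (hsome j)) := by
      intro j j' hjj
      simp only at hjj
      have hvv : v (dest1 n j) = v (dest1 n j') := by
        rw [← Option.some_get (hsome j), ← Option.some_get (hsome j'), hjj]
      exact dest1_inj n (hP.1 hvv)
    have hbij : Function.Bijective (fun j : Fin (2*n+2) => (v (dest1 n j)).get (hsome j)) :=
      (Fintype.bijective_iff_injective_and_card _).mpr ⟨hu, by rw [Fintype.card_fin, card_B]⟩
    refine ⟨Sum.inr (Sum.inl (Equiv.ofBijective _ hbij)), Subtype.ext (funext fun i => ?_)⟩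
    show g1 n (Equiv.ofBijective _ hbij) i = v i
    by_cases hi0 : i.val = 0
    · have hie : i = i0 n := Fin.ext hi0
      rw [hie, g1_zero, Equiv.ofBijective_apply]
      have hd : dest1 n ⟨0, by omega⟩ = i0 n := if_pos rfl
      rw [show v (i0 n) = v (dest1 n ⟨0, by omega⟩) by rw [hd]]
      exact Option.some_get (hsome _)
    by_cases hi1 : i.val = 1
    · have hie : i = i1 n := Fin.ext hi1
      rw [hie, g1_one, h1]
    · obtain ⟨j, hjv⟩ : ∃ j : Fin (2*n+2), j.val = i.val - 1 := ⟨⟨i.val - 1, by omega⟩, rfl⟩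
      have hj0 : j.val ≠ 0 := by omega
      have hrep : i = idxS n j := Fin.ext (by simp [hjv]; omega)
      have hd : dest1 n j = idxS n j := if_neg hj0
      rw [hrep, g1_tail n _ _ hj0, Equiv.ofBijective_apply, ← hd]
      exact Option.some_get (hsome j)
  · -- hub third
    have hsome : ∀ j : Fin (2*n), (v (idxT n j)).isSome := by
      intro j
      rw [Option.isSome_iff_ne_none]
      intro hc
      have hij := congrArg Fin.val (hP.1 (hc.trans h2.symm))
      simp at hij
    have hfst : ∀ j : Fin (2*n), ((v (idxT n j)).get (hsome j)).1 ≠ b.1 := by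
      intro j hc
      rcases eq_or_flip hc with he | he
      · have : v (idxT n j) = v (i0 n) := by
          rw [← Option.some_get (hsome j), he, hb0]
        have := congrArg Fin.val (hP.1 this)
        simp at this
      · have : v (idxT n j) = v (i1 n) := by
          rw [← Option.some_get (hsome j), he, hb1]
        have := congrArg Fin.val (hP.1 this)
        simp at this
    have hu : Function.Injective
        (fun j : Fin (2*n) => (⟨(v (idxT n j)).get (hsome j), hfst j⟩ : {x : B n // x.1 ≠ b.1})) := by
      intro j j' hjj
      have hjj' := congrArg Subtype.val hjj
      simp only at hjj'
      have hvv : v (idxT n j) = v (idxT n j') := by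
        rw [← Option.some_get (hsome j), ← Option.some_get (hsome j'), hjj']
      have := congrArg Fin.val (hP.1 hvv)
      simp at this
      exact Fin.ext this
    have hbij : Function.Bijective
        (fun j : Fin (2*n) => (⟨(v (idxT n j)).get (hsome j), hfst j⟩ : {x : B n // x.1 ≠ b.1})) :=
      (Fintype.bijective_iff_injective_and_card _).mpr ⟨hu, by rw [Fintype.card_fin, card_ne]⟩
    refine ⟨Sum.inr (Sum.inr ⟨b, Equiv.ofBijective _ hbij⟩), Subtype.ext (funext fun i => ?_)⟩
    show g2 n b (Equiv.ofBijective _ hbij) i = v i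
    by_cases hi0 : i.val = 0
    · have hie : i = i0 n := Fin.ext hi0
      rw [hie, g2_zero, hb0]
    by_cases hi1 : i.val = 1
    · have hie : i = i1 n := Fin.ext hi1
      rw [hie, g2_one, hb1]
    by_cases hi2 : i.val = 2
    · have hie : i = i2 n := Fin.ext hi2
      rw [hie, g2_two, h2]
    · have hrep : i = idxT n ⟨i.val - 3, by omega⟩ := Fin.ext (by simp; omega)
      rw [hrep, g2_tail, Equiv.ofBijective_apply]
      exact Option.some_get (hsome _)

lemma card_EE : Nat.card (EE n) =
    (2*n+2).factorial + ((2*n+2).factorial + (2*n+2) * (2*n).factorial) := by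
  rw [Nat.card_eq_fintype_card, Fintype.card_sum, Fintype.card_sum, Fintype.card_sigma]
  have h1 : Fintype.card (Fin (2*n+2) ≃ B n) = (2*n+2).factorial := by
    rw [Fintype.card_equiv (Fintype.equivOfCardEq (by rw [Fintype.card_fin, card_B])),
      Fintype.card_fin]
  have h2 : ∀ b : B n, Fintype.card (Fin (2*n) ≃ {x : B n // x.1 ≠ b.1}) = (2*n).factorial := by
    intro b
    rw [Fintype.card_equiv (Fintype.equivOfCardEq (by rw [Fintype.card_fin, card_ne])),
      Fintype.card_fin]
  rw [h1, Finset.sum_congr rfl (fun b _ => h2 b), Finset.sum_const, Finset.card_univ, card_B,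
    smul_eq_mul]

end FriendshipRWL

theorem rwlCount_friendshipGraph (m : ℕ) (hm : 1 ≤ m) :
    (2 * m - 1) * rwlCount (friendshipGraph m) = (4 * m - 1) * (2 * m).factorial := by
  obtain ⟨n, rfl⟩ : ∃ n, m = n + 1 := ⟨m - 1, by omega⟩
  have hcard : Fintype.card (Option (Fin (n+1) × Fin 2)) = 2*n+3 := by
    rw [Fintype.card_option, Fintype.card_prod, Fintype.card_fin, Fintype.card_fin]
    ring
  have hL : rwlCount (friendshipGraph (n+1)) = Nat.card (FriendshipRWL.EE n) := by
    rw [rwlCount, hcard, rwlPrefixCount]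
    exact (Nat.card_congr (Equiv.ofBijective (FriendshipRWL.bigG n)
      ⟨FriendshipRWL.bigG_inj n, FriendshipRWL.bigG_surj n⟩)).symm
  rw [hL, FriendshipRWL.card_EE]
  have hf : (2*(n+1)).factorial = (2*n+2) * ((2*n+1) * (2*n).factorial) := by
    rw [show 2*(n+1) = 2*n+1+1 by ring, Nat.factorial_succ, Nat.factorial_succ]
  have hf2 : (2*n+2).factorial = (2*n+2) * ((2*n+1) * (2*n).factorial) := by
    rw [show 2*n+2 = 2*n+1+1 by ring, Nat.factorial_succ, Nat.factorial_succ]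
  rw [hf2, hf, show 2*(n+1)-1 = 2*n+1 by omega, show 4*(n+1)-1 = 4*n+3 by omega]
  ring
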